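/- Let μ_σ and μ_ε be nonzero positive finite Borel measures on [0,1] satisfying the thermodynamical restriction (T). Suppose max supp μ_σ = max supp μ_ε = M and μ_σ({M}) = μ_ε({M}) = 0, and set τ := inf_{0 ≤ x < M} μ_σ([x,M])/μ_ε([x,M]) (note μ_ε([x,M]) > 0 for every x < M). Then for every ε > 0 there exists δ > 0 such that for every Borel set A ⊆ [M−δ, M]: τ·μ_ε(A) ≤ μ_σ(A) ≤ (τ+ε)·μ_ε(A). -/

import Mathlib

open MeasureTheory Complex Set

/-- `M` is the largest point of the support of the measure `μ` (supported in `[0,1]`). -/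
def IsMaxSupport (μ : Measure ℝ) (M : ℝ) : Prop :=
  M ∈ Set.Icc (0:ℝ) 1 ∧ μ (Set.Ioi M) = 0 ∧ ∀ ε > 0, 0 < μ (Set.Icc (M - ε) M)

/-- The thermodynamical restriction (T). -/
def TDrestriction (μσ με : Measure ℝ) : Prop :=
  ∀ E : Set (ℝ × ℝ), MeasurableSet E →
    E ⊆ {p : ℝ × ℝ | p.2 < p.1 ∧ p.1 ∈ Set.Icc (0:ℝ) 1 ∧ p.2 ∈ Set.Icc (0:ℝ) 1} →
    (μσ.prod με) E ≤ (με.prod μσ) E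

/-- Rectangle consequence of the thermodynamical restriction. -/
lemma aux_rect (μσ με : Measure ℝ) [IsFiniteMeasure μσ] [IsFiniteMeasure με]
    (hT : TDrestriction μσ με) {t M : ℝ} (ht0 : 0 ≤ t) (htM : t ≤ M) (hM1 : M ≤ 1)
    {A B : Set ℝ} (hA : MeasurableSet A) (hB : MeasurableSet B)
    (hA' : A ⊆ Set.Icc t M) (hB' : B ⊆ Set.Ico 0 t) :
    μσ A * με B ≤ με A * μσ B := by
  have h := hT (A ×ˢ B) (hA.prod hB) ?_
  · rwa [Measure.prod_prod, Measure.prod_prod] at h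
  · rintro ⟨α, β⟩ ⟨hα, hβ⟩
    obtain ⟨hα1, hα2⟩ := hA' hα
    obtain ⟨hβ1, hβ2⟩ := hB' hβ
    exact ⟨lt_of_lt_of_le hβ2 hα1, ⟨le_trans ht0 hα1, le_trans hα2 hM1⟩,
      ⟨hβ1, le_trans hβ2.le (le_trans htM hM1)⟩⟩

theorem stmt_9 (μσ με : Measure ℝ) [IsFiniteMeasure μσ] [IsFiniteMeasure με]
    (hσ : μσ ≠ 0) (hε : με ≠ 0)
    (hσsupp : μσ (Set.Icc (0:ℝ) 1)ᶜ = 0) (hεsupp : με (Set.Icc (0:ℝ) 1)ᶜ = 0)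
    (hT : TDrestriction μσ με)
    (M : ℝ) (hMσ : IsMaxSupport μσ M) (hMε : IsMaxSupport με M)
    (hatomσ : μσ {M} = 0) (hatomε : με {M} = 0) :
    ∀ ε > 0, ∃ δ > 0, ∀ A : Set ℝ, MeasurableSet A → A ⊆ Set.Icc (M - δ) M →
      ENNReal.ofReal
          (sInf {r : ℝ | ∃ x ∈ Set.Ico (0:ℝ) M,
            r = (μσ (Set.Icc x M)).toReal / (με (Set.Icc x M)).toReal}) * με A
        ≤ μσ A
      ∧ μσ A ≤
        ENNReal.ofReal
          ((sInf {r : ℝ | ∃ x ∈ Set.Ico (0:ℝ) M,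
            r = (μσ (Set.Icc x M)).toReal / (με (Set.Icc x M)).toReal}) + ε) * με A := by
  intro ε hεpos
  have hM0 : 0 ≤ M := hMσ.1.1
  have hM1 : M ≤ 1 := hMσ.1.2
  -- M > 0
  have hMpos : 0 < M := by
    rcases lt_or_eq_of_le hM0 with h | h
    · exact h
    · exfalso
      have h1 := hMσ.2.2 1 one_pos
      have h2 : Set.Icc (M - 1) M ⊆ (Set.Icc (0:ℝ) 1)ᶜ ∪ {M} := by
        intro x ⟨hx1, hx2⟩
        rcases lt_or_eq_of_le hx2 with hx | hx
        · left
          intro ⟨hx3, _⟩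
          rw [← h] at hx
          exact absurd hx3 (not_le.mpr hx)
        · right; exact hx
      have h3 : μσ (Set.Icc (M - 1) M) = 0 := by
        refine le_antisymm ?_ zero_le
        calc μσ (Set.Icc (M - 1) M) ≤ μσ ((Set.Icc (0:ℝ) 1)ᶜ ∪ {M}) := measure_mono h2
        _ ≤ μσ (Set.Icc (0:ℝ) 1)ᶜ + μσ {M} := measure_union_le _ _
        _ = 0 := by rw [hσsupp, hatomσ, add_zero]
      rw [h3] at h1; exact lt_irrefl _ h1
  set S := {r : ℝ | ∃ x ∈ Set.Ico (0:ℝ) M,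
      r = (μσ (Set.Icc x M)).toReal / (με (Set.Icc x M)).toReal} with hS
  set τ := sInf S with hτ
  have hSne : S.Nonempty := ⟨_, 0, ⟨le_refl 0, hMpos⟩, rfl⟩
  have hSbdd : BddBelow S := by
    refine ⟨0, ?_⟩
    rintro r ⟨x, hx, rfl⟩
    exact div_nonneg ENNReal.toReal_nonneg ENNReal.toReal_nonneg
  have hτ0 : 0 ≤ τ := by
    refine le_csInf hSne ?_
    rintro r ⟨x, hx, rfl⟩
    exact div_nonneg ENNReal.toReal_nonneg ENNReal.toReal_nonneg
  have hGpos : ∀ t : ℝ, t < M → 0 < με (Set.Icc t M) := by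
    intro t ht
    have := hMε.2.2 (M - t) (sub_pos.mpr ht)
    rwa [sub_sub_cancel] at this
  have hτle : ∀ t ∈ Set.Ico (0:ℝ) M,
      τ ≤ (μσ (Set.Icc t M)).toReal / (με (Set.Icc t M)).toReal := by
    intro t ht
    exact csInf_le hSbdd ⟨t, ht, rfl⟩
  -- step: lower bound for sets strictly below M
  have step : ∀ t ∈ Set.Ico (0:ℝ) M, ∀ B : Set ℝ, MeasurableSet B → B ⊆ Set.Ico 0 t →
      ENNReal.ofReal τ * με B ≤ μσ B := by
    intro t ht B hBm hBs
    have hrect : μσ (Set.Icc t M) * με B ≤ με (Set.Icc t M) * μσ B :=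
      aux_rect μσ με hT ht.1 ht.2.le hM1 measurableSet_Icc hBm subset_rfl hBs
    set Ft := μσ (Set.Icc t M) with hFt
    set Gt := με (Set.Icc t M) with hGt
    have hGt0 : Gt ≠ 0 := (hGpos t ht.2).ne'
    have hGtt : Gt ≠ ⊤ := measure_ne_top _ _
    have hGtr : 0 < Gt.toReal := ENNReal.toReal_pos hGt0 hGtt
    calc ENNReal.ofReal τ * με B
        ≤ ENNReal.ofReal (Ft.toReal / Gt.toReal) * με B :=
          mul_le_mul_left (ENNReal.ofReal_le_ofReal (hτle t ht)) _
      _ = Ft / Gt * με B := by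
          rw [ENNReal.ofReal_div_of_pos hGtr, ENNReal.ofReal_toReal (measure_ne_top _ _),
            ENNReal.ofReal_toReal hGtt]
      _ = Ft * με B / Gt := by
          rw [div_eq_mul_inv, div_eq_mul_inv]; ring
      _ ≤ μσ B := by
          rw [ENNReal.div_le_iff hGt0 hGtt, mul_comm (μσ B) Gt]
          exact hrect
  -- lower bound for all sets in [0, M]
  have lower : ∀ B : Set ℝ, MeasurableSet B → B ⊆ Set.Icc 0 M →
      ENNReal.ofReal τ * με B ≤ μσ B := by
    intro B hBm hBs
    set t : ℕ → ℝ := fun n => M - M / (n + 1) with htdef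
    have htmem : ∀ n : ℕ, t n ∈ Set.Ico (0:ℝ) M := by
      intro n
      constructor
      · have : M / (n + 1) ≤ M / 1 := by
          apply div_le_div_of_nonneg_left hM0 one_pos
          exact_mod_cast Nat.succ_le_succ (Nat.zero_le n)
        simp only [htdef, div_one] at this ⊢
        linarith
      · have : 0 < M / (n + 1) := by positivity
        simp only [htdef]; linarith
    have htmono : Monotone t := by
      intro a b hab
      have : M / (b + 1) ≤ M / (a + 1) := by
        apply div_le_div_of_nonneg_left hM0 (by positivity)
        exact_mod_cast Nat.succ_le_succ hab
      simp only [htdef]; linarith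
    have hmono : Monotone (fun n => B ∩ Set.Iio (t n)) := by
      intro a b hab
      exact inter_subset_inter_right _ (Iio_subset_Iio (htmono hab))
    have hunion : ⋃ n, B ∩ Set.Iio (t n) = B ∩ Set.Iio M := by
      apply subset_antisymm
      · refine iUnion_subset fun n => inter_subset_inter_right _ (Iio_subset_Iio ?_)
        exact (htmem n).2.le
      · rintro a ⟨haB, haM⟩
        have hpos : 0 < M - a := sub_pos.mpr haM
        obtain ⟨n, hn⟩ := exists_nat_gt (M / (M - a))
        refine mem_iUnion.mpr ⟨n, haB, ?_⟩
        have h1 : M / (M - a) < (n : ℝ) + 1 := hn.trans (lt_add_one _)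
        have h2 : M < ((n : ℝ) + 1) * (M - a) := by
          rwa [div_lt_iff₀ hpos] at h1
        have h3 : M / ((n : ℝ) + 1) < M - a := by
          rw [div_lt_iff₀ (by positivity)]
          linarith [h2]
        simp only [htdef, Set.mem_Iio]
        linarith
    have hBM : ∀ (μ : Measure ℝ), μ {M} = 0 → μ (B ∩ Set.Iio M) = μ B := by
      intro μ hμ
      apply le_antisymm (measure_mono inter_subset_left)
      calc μ B ≤ μ ((B ∩ Set.Iio M) ∪ {M}) := by
            apply measure_mono
            intro a ha
            rcases lt_or_eq_of_le (hBs ha).2 with h | h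
            · exact Or.inl ⟨ha, h⟩
            · exact Or.inr h
        _ ≤ μ (B ∩ Set.Iio M) + μ {M} := measure_union_le _ _
        _ = μ (B ∩ Set.Iio M) := by rw [hμ, add_zero]
    calc ENNReal.ofReal τ * με B = ENNReal.ofReal τ * με (B ∩ Set.Iio M) := by
          rw [hBM με hatomε]
      _ = ENNReal.ofReal τ * με (⋃ n, B ∩ Set.Iio (t n)) := by rw [hunion]
      _ = ⨆ n, ENNReal.ofReal τ * με (B ∩ Set.Iio (t n)) := by
          rw [hmono.directed_le.measure_iUnion, ENNReal.mul_iSup]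
      _ ≤ μσ B := by
          refine iSup_le fun n => ?_
          refine le_trans (step (t n) (htmem n) _ (hBm.inter measurableSet_Iio) ?_)
            (measure_mono inter_subset_left)
          rintro a ⟨haB, haI⟩
          exact ⟨(hBs haB).1, haI⟩
  -- Upper bound preparation
  obtain ⟨r, ⟨x₀, hx₀, hr⟩, hrlt⟩ := exists_lt_of_csInf_lt hSne
    (show sInf S < τ + ε / 2 by rw [← hτ]; linarith)
  set Fx := μσ (Set.Icc x₀ M) with hFx
  set Gx := με (Set.Icc x₀ M) with hGx
  have hGx0 : Gx ≠ 0 := (hGpos x₀ hx₀.2).ne'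
  have hGxt : Gx ≠ ⊤ := measure_ne_top _ _
  have hGxr : 0 < Gx.toReal := ENNReal.toReal_pos hGx0 hGxt
  have hFxlt : Fx.toReal < (τ + ε / 2) * Gx.toReal := by
    have : Fx.toReal = r * Gx.toReal := by
      rw [hr]; field_simp
    rw [this]
    exact mul_lt_mul_of_pos_right hrlt hGxr
  have hτεpos : 0 < τ + ε := by linarith
  have hτε2pos : 0 < τ + ε / 2 := by linarith
  set b := (τ + ε / 2) / (τ + ε) * Gx.toReal with hb
  have hbpos : 0 < b := by positivity
  have hbGx : b < Gx.toReal := by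
    have h1 : (τ + ε / 2) / (τ + ε) < 1 := (div_lt_one hτεpos).mpr (by linarith)
    calc b < 1 * Gx.toReal := mul_lt_mul_of_pos_right h1 hGxr
      _ = Gx.toReal := one_mul _
  -- sequence increasing to M, staying above x₀
  set s : ℕ → ℝ := fun n => M - (M - x₀) / (n + 1) with hsdef
  have hMx₀ : 0 < M - x₀ := sub_pos.mpr hx₀.2
  have hsmem : ∀ n : ℕ, s n ∈ Set.Ico x₀ M := by
    intro n
    constructor
    · have : (M - x₀) / (n + 1) ≤ (M - x₀) / 1 := by
        apply div_le_div_of_nonneg_left hMx₀.le one_pos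
        exact_mod_cast Nat.succ_le_succ (Nat.zero_le n)
      simp only [hsdef, div_one] at this ⊢; linarith
    · have : 0 < (M - x₀) / (n + 1) := by positivity
      simp only [hsdef]; linarith
  have hsmono : Monotone s := by
    intro a c hac
    have : (M - x₀) / (c + 1) ≤ (M - x₀) / (a + 1) := by
      apply div_le_div_of_nonneg_left hMx₀.le (by positivity)
      exact_mod_cast Nat.succ_le_succ hac
    simp only [hsdef]; linarith
  have hsunion : ⋃ n, Set.Ico x₀ (s n) = Set.Ico x₀ M := by
    apply subset_antisymm
    · exact iUnion_subset fun n => Ico_subset_Ico_right (hsmem n).2.le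
    · rintro a ⟨ha1, ha2⟩
      have hpos : 0 < M - a := sub_pos.mpr ha2
      obtain ⟨n, hn⟩ := exists_nat_gt ((M - x₀) / (M - a))
      refine mem_iUnion.mpr ⟨n, ha1, ?_⟩
      have h1 : (M - x₀) / (M - a) < (n : ℝ) + 1 := hn.trans (lt_add_one _)
      have h2 : M - x₀ < ((n : ℝ) + 1) * (M - a) := by rwa [div_lt_iff₀ hpos] at h1
      have h3 : (M - x₀) / ((n : ℝ) + 1) < M - a := by
        rw [div_lt_iff₀ (by positivity)]; linarith
      simp only [hsdef, Set.mem_Iio]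
      linarith
    -- the measure of Ico x₀ M equals Gx
  have hIcoM : με (Set.Ico x₀ M) = Gx := by
    apply le_antisymm (measure_mono Ico_subset_Icc_self)
    calc Gx ≤ με (Set.Ico x₀ M ∪ {M}) := by
          apply measure_mono
          intro a ⟨ha1, ha2⟩
          rcases lt_or_eq_of_le ha2 with h | h
          · exact Or.inl ⟨ha1, h⟩
          · exact Or.inr h
      _ ≤ με (Set.Ico x₀ M) + με {M} := measure_union_le _ _
      _ = με (Set.Ico x₀ M) := by rw [hatomε, add_zero]
  have hsup : ENNReal.ofReal b < ⨆ n, με (Set.Ico x₀ (s n)) := by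
    have hmono2 : Monotone (fun n => Set.Ico x₀ (s n)) := by
      intro a c hac
      exact Ico_subset_Ico_right (hsmono hac)
    rw [← hmono2.directed_le.measure_iUnion, hsunion, hIcoM]
    calc ENNReal.ofReal b < ENNReal.ofReal Gx.toReal :=
          (ENNReal.ofReal_lt_ofReal_iff hGxr).mpr hbGx
      _ = Gx := ENNReal.ofReal_toReal hGxt
  obtain ⟨n, hn⟩ := lt_iSup_iff.mp hsup
  set m := max n 1 with hm
  set t := s m with ht
  have hμεB_lb : ENNReal.ofReal b < με (Set.Ico x₀ t) :=
    hn.trans_le (measure_mono (Ico_subset_Ico_right (hsmono (le_max_left n 1))))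
  have htx₀ : x₀ < t := by
    have h1 : (M - x₀) / ((m : ℝ) + 1) < (M - x₀) / 1 := by
      apply div_lt_div_of_pos_left hMx₀ one_pos
      have : (1 : ℕ) ≤ m := le_max_right n 1
      have : (1 : ℝ) ≤ (m : ℝ) := by exact_mod_cast this
      linarith
    simp only [ht, hsdef, div_one] at h1 ⊢
    linarith
  have ht0 : 0 ≤ t := le_trans hx₀.1 htx₀.le
  have htM : t < M := (hsmem m).2
  set B := Set.Ico x₀ t with hB
  have hμεB0 : με B ≠ 0 := (lt_of_le_of_lt zero_le hμεB_lb).ne'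
  have hμεBt : με B ≠ ⊤ := measure_ne_top _ _
  have hkey : Fx ≤ ENNReal.ofReal (τ + ε) * με B := by
    calc Fx = ENNReal.ofReal Fx.toReal := (ENNReal.ofReal_toReal (measure_ne_top _ _)).symm
      _ ≤ ENNReal.ofReal ((τ + ε / 2) * Gx.toReal) := ENNReal.ofReal_le_ofReal hFxlt.le
      _ = ENNReal.ofReal (τ + ε) * ENNReal.ofReal b := by
          rw [← ENNReal.ofReal_mul hτεpos.le]
          congr 1
          rw [hb]
          field_simp
      _ ≤ ENNReal.ofReal (τ + ε) * με B := mul_le_mul_right hμεB_lb.le _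
  refine ⟨M - t, sub_pos.mpr htM, ?_⟩
  intro A hAm hAs
  rw [sub_sub_cancel] at hAs
  constructor
  · exact lower A hAm (hAs.trans (Icc_subset_Icc_left ht0))
  · have hrect : μσ A * με B ≤ με A * μσ B :=
      aux_rect μσ με hT ht0 htM.le hM1 hAm measurableSet_Ico hAs
        (Ico_subset_Ico_left hx₀.1)
    have hμσB : μσ B ≤ Fx := measure_mono (fun a ⟨h1, h2⟩ => ⟨h1, h2.le.trans htM.le⟩)
    have hchain : μσ A * με B ≤ (ENNReal.ofReal (τ + ε) * με A) * με B := by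
      calc μσ A * με B ≤ με A * μσ B := hrect
        _ ≤ με A * Fx := mul_le_mul_right hμσB _
        _ ≤ με A * (ENNReal.ofReal (τ + ε) * με B) := mul_le_mul_right hkey _
        _ = (ENNReal.ofReal (τ + ε) * με A) * με B := by ring
    exact (ENNReal.mul_le_mul_iff_left hμεB0 hμεBt).mp hchain
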